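/- arXiv:2001.09139 — 2 statements merged into one kernel-verified Lean document; each statement's English description precedes it below -/
import Mathlib

section
/- Let Z: Λ → ℂ be a group homomorphism from a finitely generated abelian group, and let Q be a quadratic form on Λ ⊗ ℝ that is negative definite on ker Z ⊗ ℝ. Suppose v₁, v₂ ∈ Λ satisfy Q(v₁) ≥ 0, Q(v₂) ≥ 0, Z(v₁) and Z(v₂) lie on the same ray ℝ_{>0}·e^{iπφ} in ℂ. Then Q(a v₁ + b v₂) ≥ 0 for all real a, b ≥ 0. -/
open Complex

/-- Support-property gluing: let `Z : Λ → ℂ` be (the real-linear extension to `Λ ⊗ ℝ` of)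
a group homomorphism from a finitely generated abelian group, and `Q` a quadratic form on
`Λ ⊗ ℝ` which is negative definite on `ker Z`. If `v₁, v₂` satisfy `Q v₁ ≥ 0`,
`Q v₂ ≥ 0`, and `Z v₁`, `Z v₂` lie on the same ray `ℝ_{>0} · e^{iπφ}` in `ℂ`, then
`Q (a • v₁ + b • v₂) ≥ 0` for all reals `a, b ≥ 0`. -/
theorem stmt_12 {Λ : Type*} [AddCommGroup Λ] [Module ℝ Λ] [FiniteDimensional ℝ Λ]
    (Z : Λ →ₗ[ℝ] ℂ) (Q : QuadraticForm ℝ Λ)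
    (hneg : ∀ w : Λ, w ≠ 0 → Z w = 0 → Q w < 0)
    (v₁ v₂ : Λ) (h₁ : 0 ≤ Q v₁) (h₂ : 0 ≤ Q v₂)
    (φ : ℝ) (r₁ r₂ : ℝ) (hr₁ : 0 < r₁) (hr₂ : 0 < r₂)
    (hZ₁ : Z v₁ = r₁ * Complex.exp (Real.pi * φ * Complex.I))
    (hZ₂ : Z v₂ = r₂ * Complex.exp (Real.pi * φ * Complex.I)) :
    ∀ a b : ℝ, 0 ≤ a → 0 ≤ b → 0 ≤ Q (a • v₁ + b • v₂) := by
  set c : ℝ := r₁ / r₂ with hc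
  have hcpos : 0 < c := div_pos hr₁ hr₂
  have hZw : Z (v₁ - c • v₂) = 0 := by
    simp only [map_sub, map_smul, hZ₁, hZ₂, hc]
    have h2 : (r₂ : ℂ) ≠ 0 := Complex.ofReal_ne_zero.mpr hr₂.ne'
    field_simp
    rw [Complex.real_smul, Complex.ofReal_div, div_eq_mul_inv]
    linear_combination (-((r₁ : ℂ) * cexp (↑Real.pi * ↑φ * I))) * mul_inv_cancel₀ h2
  have hpolar : 0 ≤ QuadraticMap.polar Q v₁ v₂ := by
    by_cases h0 : v₁ - c • v₂ = 0
    · have hv : v₁ = c • v₂ := by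
        have := sub_eq_zero.mp h0
        simpa using this
      rw [hv, QuadraticMap.polar_smul_left, QuadraticMap.polar_self]
      positivity
    · have hQw := hneg _ h0 hZw
      have hexp : Q (v₁ - c • v₂) =
          Q v₁ + c ^ 2 * Q v₂ - c * QuadraticMap.polar Q v₁ v₂ := by
        rw [sub_eq_add_neg, QuadraticMap.map_add Q, QuadraticMap.map_neg,
          QuadraticMap.map_smul, QuadraticMap.polar_neg_right,
          QuadraticMap.polar_smul_right]
        ring_nf
      nlinarith [hQw, hexp, sq_nonneg c]
  intro a b ha hb
  have hexp2 : Q (a • v₁ + b • v₂) =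
      a ^ 2 * Q v₁ + b ^ 2 * Q v₂ + a * b * QuadraticMap.polar Q v₁ v₂ := by
    rw [QuadraticMap.map_add Q, QuadraticMap.map_smul, QuadraticMap.map_smul,
      QuadraticMap.polar_smul_left, QuadraticMap.polar_smul_right]
    simp [smul_eq_mul]
    ring
  rw [hexp2]
  positivity
end

section
/- Let Z: K → ℂ be an additive stability function on an abelian category A (i.e., Z(E) ∈ ℝ_{>0}·e^{iπφ(E)} with φ(E) ∈ (0,1] for all nonzero E) such that the image of Im Z is a discrete subgroup of ℝ and A is Noetherian. Then every object of A admits a Harder–Narasimhan filtration with respect to Z. -/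
open CategoryTheory CategoryTheory.Limits

variable {C : Type*} [Category C] [Abelian C]

/-- `Z A` has phase at most the phase of `Z B`: for nonzero complex numbers
`r₁ e^{iπφ₁}` and `r₂ e^{iπφ₂}` with `φ₁, φ₂ ∈ (0,1]` this is equivalent to
`φ₁ ≤ φ₂`. -/
def phaseLE (Z : C → ℂ) (A B : C) : Prop :=
  (Z A * (starRingEnd ℂ) (Z B)).im ≤ 0

/-- Strict phase comparison. -/
def phaseLT (Z : C → ℂ) (A B : C) : Prop :=
  (Z A * (starRingEnd ℂ) (Z B)).im < 0

/-- An object is `Z`-semistable if it is nonzero and no nonzero subobject has strictly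
larger phase. -/
def Semistable (Z : C → ℂ) (X : C) : Prop :=
  ¬ Limits.IsZero X ∧ ∀ A : Subobject X, ¬ Limits.IsZero (A : C) → phaseLE Z (A : C) X

/-- A filtration `0 = E₀ ⊆ E₁ ⊆ ... ⊆ Eₙ = X` by subobjects. -/
structure SubobjectFiltration (X : C) where
  n : ℕ
  s : Fin (n + 1) → Subobject X
  mono : Monotone s
  bot : s 0 = ⊥
  top : s (Fin.last n) = ⊤

/-- The `i`-th factor `E_{i+1}/E_i` of a filtration. -/
noncomputable def SubobjectFiltration.factor {X : C} (Fl : SubobjectFiltration X)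
    (i : Fin Fl.n) : C :=
  cokernel (Subobject.ofLE (Fl.s i.castSucc) (Fl.s i.succ)
    (Fl.mono (le_of_lt (Fin.castSucc_lt_succ (i := i)))))

namespace HN17

open Complex Real
set_option linter.unusedSectionVars false



def InCone (z : ℂ) : Prop := 0 < z.im ∨ (z.im = 0 ∧ z.re < 0)

lemma InCone.ne_zero {z : ℂ} (h : InCone z) : z ≠ 0 := by
  rintro rfl
  rcases h with h | ⟨_, h⟩ <;> simp at h

lemma InCone.im_nonneg {z : ℂ} (h : InCone z) : 0 ≤ z.im := by
  rcases h with h | ⟨h, _⟩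
  · exact h.le
  · exact h.ge

lemma InCone.arg_pos {z : ℂ} (h : InCone z) : 0 < z.arg := by
  rcases h with h | ⟨h1, h2⟩
  · rcases lt_or_eq_of_le (Complex.arg_nonneg_iff.mpr h.le) with h' | h'
    · exact h'
    · exfalso
      rcases Complex.arg_eq_zero_iff.mp h'.symm with ⟨_, h''⟩
      rw [h''] at h; exact lt_irrefl 0 h
  · rw [Complex.arg_eq_pi_iff.mpr ⟨h2, h1⟩]; exact Real.pi_pos

lemma InCone.arg_le_pi {z : ℂ} (_ : InCone z) : z.arg ≤ π := Complex.arg_le_pi z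

lemma arg_eq_pi_of_im_zero {z : ℂ} (h : InCone z) (h0 : z.im = 0) : z.arg = π := by
  rcases h with h | ⟨h1, h2⟩
  · rw [h0] at h; exact absurd h (lt_irrefl 0)
  · exact Complex.arg_eq_pi_iff.mpr ⟨h2, h1⟩

lemma cross_eq (z w : ℂ) :
    (z * (starRingEnd ℂ) w).im = z.im * w.re - z.re * w.im := by
  simp [Complex.mul_im]
  ring

lemma cross_eq_sin (z w : ℂ) :
    (z * (starRingEnd ℂ) w).im = ‖z‖ * ‖w‖ * Real.sin (z.arg - w.arg) := by
  rw [cross_eq, Real.sin_sub, ← Complex.norm_mul_sin_arg z, ← Complex.norm_mul_cos_arg z,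
    ← Complex.norm_mul_sin_arg w, ← Complex.norm_mul_cos_arg w]
  ring

lemma sin_neg_iff_of_mem {x : ℝ} (h1 : -π < x) (h2 : x < π) : Real.sin x < 0 ↔ x < 0 := by
  constructor
  · intro h
    by_contra h'
    push_neg at h'
    exact absurd (Real.sin_nonneg_of_nonneg_of_le_pi h' h2.le) (not_le.mpr h)
  · intro h
    exact Real.sin_neg_of_neg_of_neg_pi_lt h h1

lemma cross_lt_iff {z w : ℂ} (hz : InCone z) (hw : InCone w) :
    (z * (starRingEnd ℂ) w).im < 0 ↔ z.arg < w.arg := by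
  rw [cross_eq_sin z w]
  have hz0 : 0 < ‖z‖ := norm_pos_iff.mpr hz.ne_zero
  have hw0 : 0 < ‖w‖ := norm_pos_iff.mpr hw.ne_zero
  rw [mul_neg_iff]
  constructor
  · rintro (⟨_, h⟩ | ⟨h, _⟩)
    · have := (sin_neg_iff_of_mem (by linarith [hz.arg_pos, hw.arg_le_pi])
        (by linarith [hw.arg_pos, hz.arg_le_pi])).mp h
      linarith
    · exfalso; exact absurd (mul_pos hz0 hw0) (not_lt.mpr h.le)
  · intro h
    left
    refine ⟨mul_pos hz0 hw0, ?_⟩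
    exact (sin_neg_iff_of_mem (by linarith [hz.arg_pos, hw.arg_le_pi])
      (by linarith [hw.arg_pos, hz.arg_le_pi])).mpr (by linarith)

lemma cross_swap (z w : ℂ) :
    (w * (starRingEnd ℂ) z).im = -(z * (starRingEnd ℂ) w).im := by
  rw [cross_eq, cross_eq]; ring

lemma cross_le_iff {z w : ℂ} (hz : InCone z) (hw : InCone w) :
    (z * (starRingEnd ℂ) w).im ≤ 0 ↔ z.arg ≤ w.arg := by
  have hws := cross_swap z w
  have h2 := cross_lt_iff hw hz
  constructor
  · intro h
    by_contra h'
    push_neg at h'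
    have := h2.mpr h'
    rw [hws] at this
    linarith
  · intro h
    by_contra h'
    push_neg at h'
    have h3 : (w * (starRingEnd ℂ) z).im < 0 := by rw [hws]; linarith
    exact absurd h (not_le.mpr (h2.mp h3))

lemma cross_add_right (z w : ℂ) :
    (z * (starRingEnd ℂ) (z + w)).im = (z * (starRingEnd ℂ) w).im := by
  rw [cross_eq, cross_eq]; simp only [Complex.add_re, Complex.add_im]; ring

lemma cross_add_left (z w : ℂ) :
    ((z + w) * (starRingEnd ℂ) w).im = (z * (starRingEnd ℂ) w).im := by
  rw [cross_eq, cross_eq]; simp only [Complex.add_re, Complex.add_im]; ring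

section Seesaw

variable {a b c : ℂ} (ha : InCone a) (hb : InCone b) (hc : InCone c) (hsum : b = a + c)

include ha hb hc hsum

lemma seesaw_le₁ : a.arg ≤ b.arg ↔ a.arg ≤ c.arg := by
  rw [← cross_le_iff ha hb, ← cross_le_iff ha hc, hsum, cross_add_right]

lemma seesaw_lt₁ : a.arg < b.arg ↔ a.arg < c.arg := by
  rw [← cross_lt_iff ha hb, ← cross_lt_iff ha hc, hsum, cross_add_right]

lemma seesaw_le₂ : b.arg ≤ c.arg ↔ a.arg ≤ c.arg := by
  rw [← cross_le_iff hb hc, ← cross_le_iff ha hc, hsum, cross_add_left]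

lemma seesaw_lt₂ : b.arg < c.arg ↔ a.arg < c.arg := by
  rw [← cross_lt_iff hb hc, ← cross_lt_iff ha hc, hsum, cross_add_left]

end Seesaw




lemma isZero_cokernel_of_epi {X Y : C} (f : X ⟶ Y) [Epi f] : IsZero (cokernel f) := by
  have h : cokernel.π f = 0 := cokernel.π_of_epi (f := f)
  have : Epi (0 : Y ⟶ cokernel f) := by rw [← h]; infer_instance
  exact IsZero.of_epi_zero Y (cokernel f)

lemma not_isZero_cokernel_arrow {X : C} (A : Subobject X) (h : A ≠ ⊤) :
    ¬ IsZero (cokernel A.arrow) := by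
  intro hz
  have : Epi A.arrow := Preadditive.epi_of_isZero_cokernel _ hz
  have : IsIso A.arrow := isIso_of_mono_of_epi _
  exact h ((Subobject.isIso_arrow_iff_eq_top A).mp this)

lemma isIso_ofLE_of_le {X : C} {A P : Subobject X} (h : A ≤ P) (h' : P ≤ A) :
    IsIso (Subobject.ofLE A P h) := by
  refine ⟨Subobject.ofLE P A h', ?_, ?_⟩
  · rw [Subobject.ofLE_comp_ofLE, ← cancel_mono A.arrow, Subobject.ofLE_arrow, Category.id_comp]
  · rw [Subobject.ofLE_comp_ofLE, ← cancel_mono P.arrow, Subobject.ofLE_arrow, Category.id_comp]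

/-- `A.arrow` is a kernel of `cokernel.π A.arrow`. -/
noncomputable def subIsKernel {X : C} (A : Subobject X) :
    IsLimit (KernelFork.ofι A.arrow (cokernel.condition A.arrow)) :=
  Abelian.monoIsKernelOfCokernel
    (CokernelCofork.ofπ (cokernel.π A.arrow) (cokernel.condition A.arrow))
    (cokernelIsCokernel A.arrow)

section PB

variable {X : C} (A : Subobject X) (B : Subobject (cokernel A.arrow))

/-- The preimage in `X` of a subobject of `X/A`. -/
noncomputable def psub : Subobject X :=
  Subobject.mk (pullback.snd B.arrow (cokernel.π A.arrow))

lemma a_le_psub : A ≤ psub A B := by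
  refine Subobject.le_mk_of_comm
    (pullback.lift 0 A.arrow (by simp [cokernel.condition]) : (A : C) ⟶ _) ?_
  exact pullback.lift_snd _ _ _

/-- The projection from the preimage onto the subobject of the quotient. -/
noncomputable def pproj : ((psub A B : Subobject X) : C) ⟶ (B : C) :=
  (Subobject.underlyingIso _).hom ≫ pullback.fst B.arrow (cokernel.π A.arrow)

instance : Epi (pproj A B) := by
  have : Epi (pullback.fst B.arrow (cokernel.π A.arrow)) :=
    Abelian.epi_pullback_of_epi_g _ _
  exact epi_comp (Subobject.underlyingIso _).hom _

lemma psub_arrow_eq :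
    (Subobject.underlyingIso _).hom ≫ pullback.snd B.arrow (cokernel.π A.arrow)
      = (psub A B).arrow :=
  Subobject.underlyingIso_hom_comp_eq_mk _

lemma pproj_arrow :
    pproj A B ≫ B.arrow = (psub A B).arrow ≫ cokernel.π A.arrow := by
  unfold pproj psub
  rw [Category.assoc, pullback.condition, ← Category.assoc, Subobject.underlyingIso_hom_comp_eq_mk]

lemma ofLE_comp_pproj_zero : Subobject.ofLE A (psub A B) (a_le_psub A B) ≫ pproj A B = 0 := by
  rw [← cancel_mono B.arrow, Category.assoc, pproj_arrow, zero_comp, ← Category.assoc,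
    Subobject.ofLE_arrow, cokernel.condition]

/-- `ofLE A P` is a kernel of `pproj`. -/
noncomputable def ofLEIsKernel :
    IsLimit (KernelFork.ofι (Subobject.ofLE A (psub A B) (a_le_psub A B))
      (ofLE_comp_pproj_zero A B)) := by
  have key : ∀ {W : C} (t : W ⟶ (psub A B : C)), t ≫ pproj A B = 0 →
      ∃ l : W ⟶ (A : C), l ≫ Subobject.ofLE A (psub A B) (a_le_psub A B) = t := by
    intro W t ht
    have h1 : (t ≫ (psub A B).arrow) ≫ cokernel.π A.arrow = 0 := by
      rw [Category.assoc, ← pproj_arrow, ← Category.assoc, ht, zero_comp]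
    obtain ⟨l, hl⟩ := Fork.IsLimit.lift' (subIsKernel A) (t ≫ (psub A B).arrow) (by
      simpa using h1)
    refine ⟨l, ?_⟩
    rw [← cancel_mono (psub A B).arrow, Category.assoc, Subobject.ofLE_arrow]
    simpa using hl
  refine KernelFork.IsLimit.ofι _ _ (fun {W} t ht => (key t ht).choose)
    (fun {W} t ht => (key t ht).choose_spec) ?_
  intro W t ht m hm
  rw [← cancel_mono (Subobject.ofLE A (psub A B) (a_le_psub A B)), hm,
    (key t ht).choose_spec]

/-- The factor `P/A` is isomorphic to `B`. -/
noncomputable def factorIso :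
    cokernel (Subobject.ofLE A (psub A B) (a_le_psub A B)) ≅ (B : C) :=
  IsColimit.coconePointUniqueUpToIso
    (cokernelIsCokernel _)
    (Abelian.epiIsCokernelOfKernel _ (ofLEIsKernel A B))

lemma psub_arrow_comp_zero :
    (psub A B).arrow ≫ cokernel.π A.arrow ≫ cokernel.π B.arrow = 0 := by
  rw [← Category.assoc, ← pproj_arrow, Category.assoc, cokernel.condition, comp_zero]

/-- `P.arrow` is a kernel of `X ⟶ (X/A)/B`. -/
noncomputable def psubIsKernel :
    IsLimit (KernelFork.ofι (psub A B).arrow (psub_arrow_comp_zero A B)) := by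
  have key : ∀ {W : C} (t : W ⟶ X), t ≫ (cokernel.π A.arrow ≫ cokernel.π B.arrow) = 0 →
      ∃ l : W ⟶ (psub A B : C), l ≫ (psub A B).arrow = t := by
    intro W t ht
    have hw : (t ≫ cokernel.π A.arrow) ≫ cokernel.π B.arrow = 0 := by
      rw [Category.assoc]; exact ht
    obtain ⟨w, hwspec⟩ := Fork.IsLimit.lift' (subIsKernel B) (t ≫ cokernel.π A.arrow) (by simpa using hw)
    refine ⟨pullback.lift w t (by simpa using hwspec) ≫ (Subobject.underlyingIso _).inv, ?_⟩
    unfold psub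
    rw [Category.assoc, ← Subobject.underlyingIso_hom_comp_eq_mk, Iso.inv_hom_id_assoc, pullback.lift_snd]
  refine KernelFork.IsLimit.ofι _ _
    (fun {W} t ht => (key t (by simpa using ht)).choose)
    (fun {W} t ht => (key t (by simpa using ht)).choose_spec) ?_
  intro W t ht m hm
  rw [← cancel_mono (psub A B).arrow, hm, (key t (by simpa using ht)).choose_spec]

/-- `X/P ≅ (X/A)/B`. -/
noncomputable def quotIso :
    cokernel (psub A B).arrow ≅ cokernel B.arrow :=
  IsColimit.coconePointUniqueUpToIso
    (cokernelIsCokernel _)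
    (Abelian.epiIsCokernelOfKernel _ (psubIsKernel A B))

lemma psub_ne (hB : ¬ IsZero (B : C)) : A ≠ psub A B := by
  intro h
  apply hB
  haveI : IsIso (Subobject.ofLE A (psub A B) (a_le_psub A B)) :=
    isIso_ofLE_of_le _ (le_of_eq h.symm)
  exact (isZero_cokernel_of_epi _).of_iso (factorIso A B).symm

lemma a_lt_psub (hB : ¬ IsZero (B : C)) : A < psub A B :=
  lt_of_le_of_ne (a_le_psub A B) (psub_ne A B hB)

lemma psub_ne_top (hB : B ≠ ⊤) : psub A B ≠ ⊤ := by
  intro h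
  haveI : IsIso (psub A B).arrow := (Subobject.isIso_arrow_iff_eq_top _).mpr h
  exact not_isZero_cokernel_arrow B hB
    ((isZero_cokernel_of_epi (psub A B).arrow).of_iso (quotIso A B).symm)

end PB




section Z1

variable {Z : C → ℂ}
variable (hadd : ∀ S : ShortComplex C, S.ShortExact → Z S.X₂ = Z S.X₁ + Z S.X₃)

include hadd

lemma z_isZero {W : C} (h : IsZero W) : Z W = 0 := by
  have hS : (ShortComplex.mk (𝟙 W) (𝟙 W) (h.eq_of_src _ _)).ShortExact :=
    ShortComplex.ShortExact.mk' (ShortComplex.exact_of_isZero_X₂ _ h)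
      inferInstance inferInstance
  have := hadd _ hS
  dsimp at this
  linear_combination -this

lemma z_add_mono {A X : C} (f : A ⟶ X) [Mono f] : Z X = Z A + Z (cokernel f) := by
  have hS : (ShortComplex.mk f (cokernel.π f) (cokernel.condition f)).ShortExact :=
    ShortComplex.ShortExact.mk'
      (ShortComplex.exact_of_g_is_cokernel _ (cokernelIsCokernel f))
      inferInstance inferInstance
  exact hadd _ hS

lemma z_iso {X Y : C} (e : X ≅ Y) : Z X = Z Y := by
  haveI : Epi e.hom := inferInstance
  have h := z_add_mono hadd e.hom
  rw [z_isZero hadd (isZero_cokernel_of_epi e.hom)] at h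
  rw [h, add_zero]

end Z1


section Z2

variable {Z : C → ℂ}
variable (hadd : ∀ S : ShortComplex C, S.ShortExact → Z S.X₂ = Z S.X₁ + Z S.X₃)
variable (hstab : ∀ X : C, ¬ IsZero X → InCone (Z X))
variable {ε : ℝ} (hε : 0 < ε) (hdisc : ∀ X : C, (Z X).im ≠ 0 → ε ≤ |(Z X).im|)

lemma mono_monoLift {W V E : C} (m : V ⟶ E) [Mono m] (g : W ⟶ E) [Mono g]
    (h : g ≫ cokernel.π m = 0) : Mono (Abelian.monoLift m g h) := by
  have hc : Abelian.monoLift m g h ≫ m = g := Abelian.monoLift_comp m g h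
  haveI : Mono (Abelian.monoLift m g h ≫ m) := by rw [hc]; infer_instance
  exact mono_of_mono (Abelian.monoLift m g h) m

include hadd

lemma z_top {E : C} : Z ((⊤ : Subobject E) : C) = Z E :=
  z_iso hadd (asIso (⊤ : Subobject E).arrow)

include hstab

lemma nz_top {E : C} (hE : ¬ IsZero E) : ¬ IsZero ((⊤ : Subobject E) : C) := fun h =>
  hE (h.of_iso (asIso (⊤ : Subobject E).arrow).symm)

include hε hdisc

lemma lemQ {E : C} (hE : ¬ IsZero E) (A : Subobject E) (hA : ¬ IsZero (A : C))
    (h : (Z E).arg < (Z (A : C)).arg) : (Z (A : C)).im + ε ≤ (Z E).im := by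
  by_cases hQ : IsZero (cokernel A.arrow)
  · exfalso
    haveI : Epi A.arrow := Preadditive.epi_of_isZero_cokernel _ hQ
    haveI : IsIso A.arrow := isIso_of_mono_of_epi _
    have hz := z_iso hadd (asIso A.arrow)
    rw [hz] at h
    exact absurd h (lt_irrefl _)
  · have hsum := z_add_mono hadd A.arrow
    have hc : InCone (Z (cokernel A.arrow)) := hstab _ hQ
    have ha : InCone (Z (A : C)) := hstab _ hA
    have hb : InCone (Z E) := hstab _ hE
    by_cases him : (Z (cokernel A.arrow)).im = 0
    · exfalso
      have hpi : (Z (cokernel A.arrow)).arg = π := arg_eq_pi_of_im_zero hc him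
      have hle : (Z (A : C)).arg ≤ (Z E).arg := by
        rw [seesaw_le₁ ha hb hc hsum, hpi]
        exact ha.arg_le_pi
      linarith
    · have h1 := hdisc _ him
      have habs : ε ≤ (Z (cokernel A.arrow)).im := by
        rcases hc with h' | ⟨h', _⟩
        · rwa [abs_of_pos h'] at h1
        · exact absurd h' him
      have h2 : (Z E).im = (Z (A : C)).im + (Z (cokernel A.arrow)).im := by
        rw [hsum]; simp
      linarith

lemma claimC [∀ X : C, IsNoetherianObject X] :
    ∀ (N : ℕ) (E : C), ¬ IsZero E → (Z E).im ≤ N * ε →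
    ∃ A : Subobject E, ¬ IsZero (A : C) ∧
      ∀ B : Subobject E, ¬ IsZero (B : C) → (Z (B : C)).arg ≤ (Z (A : C)).arg := by
  intro N
  induction N with
  | zero =>
    intro E hE him
    refine ⟨⊤, nz_top hadd hstab hE, fun B hB => ?_⟩
    have him0 : (Z E).im = 0 := le_antisymm (by simpa using him) (hstab E hE).im_nonneg
    rw [z_top hadd, arg_eq_pi_of_im_zero (hstab E hE) him0]
    exact (hstab _ hB).arg_le_pi
  | succ N ih =>
    intro E hE him
    by_cases hS : ∃ B : Subobject E, ¬ IsZero (B : C) ∧ (Z E).arg < (Z (B : C)).arg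
    swap
    · push_neg at hS
      refine ⟨⊤, nz_top hadd hstab hE, fun B hB => ?_⟩
      rw [z_top hadd]
      exact hS B hB
    · obtain ⟨M, hMS, hMmax⟩ := (wellFounded_gt (α := Subobject E)).has_min
        {A : Subobject E | ¬ IsZero (A : C) ∧ (Z E).arg < (Z (A : C)).arg} hS
      obtain ⟨hM, hMarg⟩ := hMS
      have hMim : (Z (M : C)).im ≤ N * ε := by
        have := lemQ hadd hstab hε hdisc hE M hM hMarg
        push_cast at him ⊢
        linarith
      obtain ⟨A₀, hA₀, hA₀max⟩ := ih (M : C) hM hMim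
      set q := (Z ((A₀ : Subobject (M : C)) : C)).arg with hq
      refine ⟨Subobject.mk (A₀.arrow ≫ M.arrow), ?_, ?_⟩
      · intro h
        exact hA₀ (h.of_iso (Subobject.underlyingIso _).symm)
      · intro B hB
        by_contra hB'
        push_neg at hB'
        rw [z_iso hadd (Subobject.underlyingIso (A₀.arrow ≫ M.arrow)), ← hq] at hB'
        -- now hB' : q < arg B
        have hMq : (Z (M : C)).arg ≤ q := by
          rw [hq, ← z_top (Z := Z) hadd (E := (M : C))]
          exact hA₀max ⊤ (nz_top hadd hstab hM)
        have hEB : (Z E).arg < (Z (B : C)).arg := lt_of_lt_of_le hMarg (le_of_lt (lt_of_le_of_lt hMq hB'))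
        set f := B.arrow ≫ cokernel.π M.arrow with hf
        by_cases hf0 : f = 0
        · -- B factors through M : contradiction with maximality of q
          have hl := Abelian.monoLift_comp M.arrow B.arrow hf0
          haveI := mono_monoLift M.arrow B.arrow hf0
          apply absurd (hA₀max (Subobject.mk (Abelian.monoLift M.arrow B.arrow hf0))
            (fun h => hB (h.of_iso (Subobject.underlyingIso _).symm)))
          push_neg
          rw [z_iso hadd (Subobject.underlyingIso (Abelian.monoLift M.arrow B.arrow hf0))]
          exact hB'
        · -- image argument
          have hIab : ¬ IsZero (Abelian.image f) := by
            intro hI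
            apply hf0
            rw [← Abelian.image.fac f, hI.eq_zero_of_tgt (Abelian.factorThruImage f), zero_comp]
          set Isub : Subobject (cokernel M.arrow) := Subobject.mk (Abelian.image.ι f) with hIs
          have hIsubZ : Z ((Isub : Subobject (cokernel M.arrow)) : C) = Z (Abelian.image f) :=
            z_iso hadd (Subobject.underlyingIso _)
          have hIsubnz : ¬ IsZero ((Isub : Subobject (cokernel M.arrow)) : C) :=
            fun h => hIab (h.of_iso (Subobject.underlyingIso _).symm)
          set P' := psub M Isub with hP'
          have hMP' : M < P' := a_lt_psub M Isub hIsubnz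
          have hP'nz : ¬ IsZero ((P' : Subobject E) : C) := by
            intro h
            exact hM (IsZero.of_mono (Subobject.ofLE M P' hMP'.le) h)
          have hP'E : (Z ((P' : Subobject E) : C)).arg ≤ (Z E).arg := by
            by_contra hc
            push_neg at hc
            exact hMmax P' ⟨hP'nz, hc⟩ hMP'
          have hsum2 : Z ((P' : Subobject E) : C) = Z ((M : Subobject E) : C) + Z ((Isub : Subobject (cokernel M.arrow)) : C) := by
            have h0 := z_add_mono hadd (Subobject.ofLE M P' (a_le_psub M Isub))
            rw [z_iso hadd (factorIso M Isub)] at h0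
            exact h0
          have hconeM : InCone (Z ((M : Subobject E) : C)) := hstab _ hM
          have hconeP' : InCone (Z ((P' : Subobject E) : C)) := hstab _ hP'nz
          have hconeI : InCone (Z ((Isub : Subobject (cokernel M.arrow)) : C)) := hstab _ hIsubnz
          have hIP' : (Z ((Isub : Subobject (cokernel M.arrow)) : C)).arg ≤ (Z ((P' : Subobject E) : C)).arg := by
            by_contra hcon
            push_neg at hcon
            have h1 : (Z ((M : Subobject E) : C)).arg < (Z ((Isub : Subobject (cokernel M.arrow)) : C)).arg :=
              (seesaw_lt₂ hconeM hconeP' hconeI hsum2).mp hcon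
            have h2 : (Z ((M : Subobject E) : C)).arg < (Z ((P' : Subobject E) : C)).arg :=
              (seesaw_lt₁ hconeM hconeP' hconeI hsum2).mpr h1
            linarith
          have hIB : (Z ((Isub : Subobject (cokernel M.arrow)) : C)).arg < (Z ((B : Subobject E) : C)).arg := by
            calc (Z ((Isub : Subobject (cokernel M.arrow)) : C)).arg
                ≤ (Z E).arg := le_trans hIP' hP'E
              _ < _ := hEB
          -- kernel part
          have hsum3 : Z ((B : Subobject E) : C) = Z (kernel f) + Z (Abelian.image f) := by
            have h0 := z_add_mono hadd (kernel.ι f)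
            have h1 : Z (cokernel (kernel.ι f)) = Z (Abelian.image f) :=
              z_iso hadd (Abelian.coimageIsoImage f)
            rw [h1] at h0
            exact h0
          rw [← hIsubZ] at hsum3
          have hKnz : ¬ IsZero (kernel f) := by
            intro hK
            rw [z_isZero hadd hK, zero_add] at hsum3
            rw [hsum3] at hIB
            exact absurd hIB (lt_irrefl _)
          have hconeK : InCone (Z (kernel f)) := hstab _ hKnz
          have hconeB : InCone (Z ((B : Subobject E) : C)) := hstab _ hB
          have hBK : (Z ((B : Subobject E) : C)).arg ≤ (Z (kernel f)).arg := by
            by_contra hcon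
            push_neg at hcon
            have h1 : (Z (kernel f)).arg < (Z ((Isub : Subobject (cokernel M.arrow)) : C)).arg :=
              (seesaw_lt₁ hconeK hconeB hconeI hsum3).mp hcon
            have h2 : (Z ((B : Subobject E) : C)).arg < (Z ((Isub : Subobject (cokernel M.arrow)) : C)).arg :=
              (seesaw_lt₂ hconeK hconeB hconeI hsum3).mpr h1
            linarith
          -- kernel f gives a subobject of M with phase > q : contradiction
          have hcomp : (kernel.ι f ≫ B.arrow) ≫ cokernel.π M.arrow = 0 := by
            rw [Category.assoc, ← hf, kernel.condition]
          haveI := mono_monoLift M.arrow (kernel.ι f ≫ B.arrow) hcomp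
          have hq2 := hA₀max (Subobject.mk (Abelian.monoLift M.arrow (kernel.ι f ≫ B.arrow) hcomp))
            (fun h => hKnz (h.of_iso (Subobject.underlyingIso _).symm))
          rw [z_iso hadd (Subobject.underlyingIso (Abelian.monoLift M.arrow (kernel.ι f ≫ B.arrow) hcomp))] at hq2
          linarith

end Z2
section Z3

variable {Z : C → ℂ}
variable (hadd : ∀ S : ShortComplex C, S.ShortExact → Z S.X₂ = Z S.X₁ + Z S.X₃)
variable (hstab : ∀ X : C, ¬ IsZero X → InCone (Z X))
variable {ε : ℝ} (hε : 0 < ε) (hdisc : ∀ X : C, (Z X).im ≠ 0 → ε ≤ |(Z X).im|)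
variable [∀ X : C, IsNoetherianObject X]

include hadd hstab hε hdisc

/-- Existence of a maximal destabilizing subobject together with the key property of the
induced quotient: every nonzero subobject of `E/M` has phase strictly smaller than `M`. -/
lemma mds {E : C} (hE : ¬ IsZero E) :
    ∃ M : Subobject E, ¬ IsZero (M : C) ∧
      (∀ B : Subobject E, ¬ IsZero (B : C) → (Z (B : C)).arg ≤ (Z (M : C)).arg) ∧
      (∀ B' : Subobject (cokernel M.arrow), ¬ IsZero (B' : C) →
        (Z (B' : C)).arg < (Z (M : C)).arg) := by
  -- the set of maximal-phase subobjects is nonempty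
  have hne : ∃ A : Subobject E, ¬ IsZero (A : C) ∧
      ∀ B : Subobject E, ¬ IsZero (B : C) → (Z (B : C)).arg ≤ (Z (A : C)).arg := by
    refine claimC hadd hstab hε hdisc ⌈(Z E).im / ε⌉₊ E hE ?_
    rw [← div_le_iff₀ hε] at *
    exact Nat.le_ceil _
  obtain ⟨M, hMS, hMmax⟩ := (wellFounded_gt (α := Subobject E)).has_min
    {A : Subobject E | ¬ IsZero (A : C) ∧
      ∀ B : Subobject E, ¬ IsZero (B : C) → (Z (B : C)).arg ≤ (Z (A : C)).arg} hne
  obtain ⟨hM, hMmaxphase⟩ := hMS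
  -- strict phase drop for strictly bigger subobjects
  have hstrict : ∀ M' : Subobject E, M < M' → ¬ IsZero (M' : C) →
      (Z (M' : C)).arg < (Z (M : C)).arg := by
    intro M' hlt hM'
    have : ¬ (¬ IsZero ((M' : Subobject E) : C) ∧
        ∀ B : Subobject E, ¬ IsZero (B : C) → (Z (B : C)).arg ≤ (Z (M' : C)).arg) :=
      fun h => hMmax M' h hlt
    have h2 : ∃ B : Subobject E, ¬ IsZero (B : C) ∧ (Z (M' : C)).arg < (Z (B : C)).arg := by
      by_contra hcon
      push_neg at hcon
      exact this ⟨hM', fun B hB => hcon B hB⟩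
    obtain ⟨B, hB, hBM'⟩ := h2
    exact lt_of_lt_of_le hBM' (hMmaxphase B hB)
  refine ⟨M, hM, hMmaxphase, ?_⟩
  intro B' hB'
  by_contra hcon
  push_neg at hcon
  -- hcon : arg M ≤ arg B'
  have hMP : M < psub M B' := a_lt_psub M B' hB'
  have hPnz : ¬ IsZero ((psub M B' : Subobject E) : C) := by
    intro h
    exact hM (IsZero.of_mono (Subobject.ofLE M (psub M B') hMP.le) h)
  have hsum : Z ((psub M B' : Subobject E) : C) = Z ((M : Subobject E) : C) + Z ((B' : Subobject (cokernel M.arrow)) : C) := by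
    have h0 := z_add_mono hadd (Subobject.ofLE M (psub M B') (a_le_psub M B'))
    rw [z_iso hadd (factorIso M B')] at h0
    exact h0
  have h1 : (Z ((M : Subobject E) : C)).arg ≤ (Z ((psub M B' : Subobject E) : C)).arg :=
    (seesaw_le₁ (hstab _ hM) (hstab _ hPnz) (hstab _ hB') hsum).mpr hcon
  have h2 := hstrict (psub M B') hMP hPnz
  linarith

/-- A subobject of maximal phase is semistable (as an object). -/
lemma semistable_of_maxphase {E : C} (M : Subobject E) (hM : ¬ IsZero (M : C))
    (hmax : ∀ B : Subobject E, ¬ IsZero (B : C) → (Z (B : C)).arg ≤ (Z (M : C)).arg) :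
    Semistable Z (M : C) := by
  refine ⟨hM, fun S hS => ?_⟩
  have hnz : ¬ IsZero ((Subobject.mk (S.arrow ≫ M.arrow) : Subobject E) : C) :=
    fun h => hS (h.of_iso (Subobject.underlyingIso _).symm)
  have hZ : Z ((Subobject.mk (S.arrow ≫ M.arrow) : Subobject E) : C) = Z (S : C) :=
    z_iso hadd (Subobject.underlyingIso _)
  have := hmax _ hnz
  rw [hZ] at this
  exact (cross_le_iff (hstab _ hS) (hstab _ hM)).mpr this

lemma semistable_of_iso {X Y : C} (e : X ≅ Y) (h : Semistable Z X) : Semistable Z Y := by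
  obtain ⟨hX, hmax⟩ := h
  have hY : ¬ IsZero Y := fun hz => hX (hz.of_iso e)
  refine ⟨hY, fun S hS => ?_⟩
  haveI : Mono (S.arrow ≫ e.inv) := mono_comp _ _
  have hnz : ¬ IsZero ((Subobject.mk (S.arrow ≫ e.inv) : Subobject X) : C) :=
    fun hz => hS (hz.of_iso (Subobject.underlyingIso _).symm)
  have hle := hmax _ hnz
  have hZ : Z ((Subobject.mk (S.arrow ≫ e.inv) : Subobject X) : C) = Z (S : C) :=
    z_iso hadd (Subobject.underlyingIso _)
  unfold phaseLE at hle ⊢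
  rw [hZ] at hle
  rw [← z_iso hadd e]
  exact hle

end Z3
section Z4

variable {Z : C → ℂ}
variable (hadd : ∀ S : ShortComplex C, S.ShortExact → Z S.X₂ = Z S.X₁ + Z S.X₃)
variable (hstab : ∀ X : C, ¬ IsZero X → InCone (Z X))
variable {ε : ℝ} (hε : 0 < ε) (hdisc : ∀ X : C, (Z X).im ≠ 0 → ε ≤ |(Z X).im|)
variable [∀ X : C, IsNoetherianObject X]

noncomputable def subobjectFactorIso {X : C} {U V U' V' : Subobject X} (hU : U = U') (hV : V = V')
    (h : U ≤ V) (h' : U' ≤ V') :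
    cokernel (Subobject.ofLE U V h) ≅ cokernel (Subobject.ofLE U' V' h') := by
  subst hU; subst hV; exact Iso.refl _

def ChainProp (Z : C → ℂ) {X : C} (A : Subobject X) : Prop :=
  ¬ IsZero (cokernel A.arrow) →
    ∃ (n : ℕ) (s : Fin (n + 2) → Subobject X) (hmono : Monotone s),
      s 0 = A ∧ s (Fin.last (n + 1)) = ⊤ ∧
      (∀ i : Fin (n + 1), Semistable Z (cokernel (Subobject.ofLE (s i.castSucc) (s i.succ)
        (hmono (le_of_lt (Fin.castSucc_lt_succ (i := i))))))) ∧
      (∀ i j : Fin (n + 1), i < j →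
        (Z (cokernel (Subobject.ofLE (s j.castSucc) (s j.succ)
          (hmono (le_of_lt (Fin.castSucc_lt_succ (i := j))))))).arg <
        (Z (cokernel (Subobject.ofLE (s i.castSucc) (s i.succ)
          (hmono (le_of_lt (Fin.castSucc_lt_succ (i := i))))))).arg) ∧
      (∃ B₀ : Subobject (cokernel A.arrow), ¬ IsZero (B₀ : C) ∧
        Z (B₀ : C) = Z (cokernel (Subobject.ofLE (s (0 : Fin (n + 1)).castSucc)
          (s (0 : Fin (n + 1)).succ)
          (hmono (le_of_lt (Fin.castSucc_lt_succ (i := (0 : Fin (n + 1)))))))))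

include hadd hstab hε hdisc

lemma chainAbove {X : C} : ∀ A : Subobject X, ChainProp Z A := by
  intro A
  refine (wellFounded_gt (α := Subobject X)).induction
    (C := fun A => ChainProp Z A) A ?_
  clear A
  intro A IH hQ
  obtain ⟨M, hM, hMmax, hMquot⟩ := mds hadd hstab hε hdisc hQ
  by_cases hMtop : M = ⊤
  · -- the quotient is semistable : single-step chain
    set s : Fin 2 → Subobject X := fun i => if i = 0 then A else ⊤ with hs
    have hmono : Monotone s := by
      intro i j hij
      by_cases hi : i = 0
      · by_cases hj : j = 0
        · simp [hs, hi, hj]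
        · simp [hs, hi, hj]
      · have hj : j ≠ 0 := by
          intro hj0
          exact hi (le_antisymm (hj0 ▸ hij) (Fin.zero_le i))
        simp [hs, hi, hj]
    have hs0 : s ((0 : Fin 1).castSucc) = A := by simp [hs]
    have hs1 : s ((0 : Fin 1).succ) = ⊤ := by rw [hs]; exact if_neg (by decide)
    have isoQ : ∀ (h : s ((0 : Fin 1).castSucc) ≤ s ((0 : Fin 1).succ)),
        cokernel (Subobject.ofLE _ _ h) ≅ cokernel A.arrow := by
      intro h
      refine (subobjectFactorIso hs0 hs1 h (le_top)).trans ?_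
      refine ((cokernelCompIsIso (Subobject.ofLE A ⊤ le_top) (⊤ : Subobject X).arrow).symm.trans
        (cokernelIsoOfEq ?_))
      exact Subobject.ofLE_arrow _
    have hsemiQ : Semistable Z (cokernel A.arrow) := by
      have h1 : Semistable Z ((⊤ : Subobject (cokernel A.arrow)) : C) :=
        semistable_of_maxphase hadd hstab hε hdisc ⊤ (hMtop ▸ hM) (hMtop ▸ hMmax)
      exact semistable_of_iso hadd hstab hε hdisc (asIso (⊤ : Subobject (cokernel A.arrow)).arrow) h1
    refine ⟨0, s, hmono, by simp [hs], by rw [hs]; exact if_neg (by decide), ?_, ?_, ?_⟩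
    · intro i
      have : i = 0 := Fin.ext (by omega)
      subst this
      exact semistable_of_iso hadd hstab hε hdisc (isoQ _).symm hsemiQ
    · intro i j hij
      have h0 : i = j := Fin.ext (by omega)
      subst h0
      exact absurd hij (lt_irrefl _)
    · refine ⟨⊤, nz_top hadd hstab hQ, ?_⟩
      rw [z_top hadd, z_iso hadd (isoQ _)]
  · -- M is a proper maximal destabilizing subobject of the quotient
    set P := psub A M with hPdef
    have hAP : A < P := a_lt_psub A M hM
    have hPQ : ¬ IsZero (cokernel P.arrow) := fun h =>
      not_isZero_cokernel_arrow M hMtop (h.of_iso (quotIso A M).symm)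
    obtain ⟨n, s, hmono, hs0, hstop, hsemi, hdec, B₀, hB₀nz, hB₀Z⟩ := IH P hAP hPQ
    have hmono' : Monotone (Fin.cons A s : Fin (n + 3) → Subobject X) := by
      intro i j hij
      rcases Fin.eq_zero_or_eq_succ i with rfl | ⟨i', rfl⟩
      · rcases Fin.eq_zero_or_eq_succ j with rfl | ⟨j', rfl⟩
        · exact le_rfl
        · rw [Fin.cons_zero, Fin.cons_succ]
          exact le_trans (le_of_lt (hs0 ▸ hAP)) (hmono (Fin.zero_le j'))
      · rcases Fin.eq_zero_or_eq_succ j with rfl | ⟨j', rfl⟩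
        · exfalso
          rw [Fin.le_def] at hij
          simp at hij
        · rw [Fin.cons_succ, Fin.cons_succ]
          exact hmono (by rwa [Fin.succ_le_succ_iff] at hij)
    have e0 : ∀ (h : (Fin.cons A s : Fin (n + 3) → Subobject X) ((0 : Fin (n + 2)).castSucc)
          ≤ (Fin.cons A s : Fin (n + 3) → Subobject X) ((0 : Fin (n + 2)).succ)),
        Nonempty (cokernel (Subobject.ofLE _ _ h) ≅ (M : C)) := by
      intro h
      refine ⟨(subobjectFactorIso ?_ ?_ h (a_le_psub A M)).trans (factorIso A M)⟩
      · simp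
      · show (Fin.cons A s : Fin (n + 3) → Subobject X) (Fin.succ (0 : Fin (n + 2))) = P
        rw [Fin.cons_succ, hs0]
    have eS : ∀ (k : Fin (n + 1)) (h : (Fin.cons A s : Fin (n + 3) → Subobject X) (k.succ.castSucc)
          ≤ (Fin.cons A s : Fin (n + 3) → Subobject X) (k.succ.succ)),
        Nonempty (cokernel (Subobject.ofLE _ _ h) ≅
          cokernel (Subobject.ofLE (s k.castSucc) (s k.succ)
            (hmono (le_of_lt (Fin.castSucc_lt_succ (i := k)))))) := by
      intro k h
      refine ⟨subobjectFactorIso ?_ ?_ h _⟩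
      · rw [← Fin.succ_castSucc, Fin.cons_succ]
      · show (Fin.cons A s : Fin (n + 3) → Subobject X) (Fin.succ k.succ) = s k.succ
        rw [Fin.cons_succ]
    have hfct0 : (Z (cokernel (Subobject.ofLE (s (0 : Fin (n + 1)).castSucc)
          (s (0 : Fin (n + 1)).succ)
          (hmono (le_of_lt (Fin.castSucc_lt_succ (i := (0 : Fin (n + 1))))))))).arg
        < (Z ((M : Subobject (cokernel A.arrow)) : C)).arg := by
      haveI : Mono (B₀.arrow ≫ (quotIso A M).hom) := mono_comp _ _
      have hnz' : ¬ IsZero ((Subobject.mk (B₀.arrow ≫ (quotIso A M).hom)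
          : Subobject (cokernel M.arrow)) : C) :=
        fun h => hB₀nz (h.of_iso (Subobject.underlyingIso _).symm)
      have hZ' : Z ((Subobject.mk (B₀.arrow ≫ (quotIso A M).hom)
          : Subobject (cokernel M.arrow)) : C) = Z (B₀ : C) :=
        z_iso hadd (Subobject.underlyingIso _)
      have := hMquot _ hnz'
      rw [hZ', hB₀Z] at this
      exact this
    have hd : ∀ k : Fin (n + 1),
        (Z (cokernel (Subobject.ofLE (s k.castSucc) (s k.succ)
          (hmono (le_of_lt (Fin.castSucc_lt_succ (i := k))))))).arg
        < (Z ((M : Subobject (cokernel A.arrow)) : C)).arg := by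
      intro k
      rcases eq_or_ne k 0 with rfl | hk
      · exact hfct0
      · exact lt_trans (hdec 0 k (Fin.pos_of_ne_zero hk)) hfct0
    refine ⟨n + 1, (Fin.cons A s : Fin (n + 3) → Subobject X), hmono', Fin.cons_zero _ _, ?_, ?_, ?_, ?_⟩
    · have : Fin.last (n + 2) = (Fin.last (n + 1)).succ := rfl
      rw [this, Fin.cons_succ, hstop]
    · intro i
      induction i using Fin.cases with
      | zero =>
        exact semistable_of_iso hadd hstab hε hdisc (e0 _).some.symm
          (semistable_of_maxphase hadd hstab hε hdisc M hM hMmax)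
      | succ k =>
        exact semistable_of_iso hadd hstab hε hdisc (eS k _).some.symm (hsemi k)
    · intro i j hij
      rcases Fin.eq_zero_or_eq_succ j with rfl | ⟨j', rfl⟩
      · exfalso
        rw [Fin.lt_def] at hij
        simp at hij
      · rcases Fin.eq_zero_or_eq_succ i with rfl | ⟨i', rfl⟩
        · rw [z_iso hadd (e0 _).some, z_iso hadd (eS j' _).some]
          exact hd j'
        · rw [z_iso hadd (eS j' _).some, z_iso hadd (eS i' _).some]
          exact hdec i' j' (by rwa [Fin.succ_lt_succ_iff] at hij)
    · refine ⟨M, hM, ?_⟩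
      rw [z_iso hadd (e0 _).some]

end Z4
end HN17

/-- Bridgeland's criterion: let `Z` be an additive stability function on a Noetherian
abelian category `A` (i.e. `Z(E) ∈ ℝ_{>0}·e^{iπφ(E)}` with `φ(E) ∈ (0,1]` for every
nonzero `E`), and suppose the image of `Im Z` is a discrete subgroup of `ℝ`. Then every
nonzero object of `A` admits a Harder–Narasimhan filtration with respect to `Z`: a
filtration by subobjects whose factors are `Z`-semistable of strictly decreasing
phase. -/
theorem stmt_17 [∀ X : C, IsNoetherianObject X] (Z : C → ℂ)
    (hadd : ∀ S : ShortComplex C, S.ShortExact → Z S.X₂ = Z S.X₁ + Z S.X₃)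
    (hstab : ∀ X : C, ¬ Limits.IsZero X →
      0 < (Z X).im ∨ ((Z X).im = 0 ∧ (Z X).re < 0))
    (hdisc : ∃ ε : ℝ, 0 < ε ∧ ∀ X : C, (Z X).im ≠ 0 → ε ≤ |(Z X).im|) :
    ∀ X : C, ¬ Limits.IsZero X →
      ∃ Fl : SubobjectFiltration X,
        (∀ i, Semistable Z (Fl.factor i)) ∧
        ∀ i j : Fin Fl.n, i < j → phaseLT Z (Fl.factor j) (Fl.factor i) := by
  obtain ⟨ε, hε, hd⟩ := hdisc
  intro X hX
  have hstab' : ∀ E : C, ¬ IsZero E → HN17.InCone (Z E) := hstab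
  have hbot : ¬ IsZero (cokernel (⊥ : Subobject X).arrow) := by
    intro h
    apply hX
    have e : cokernel (⊥ : Subobject X).arrow ≅ X :=
      (cokernelIsoOfEq Subobject.bot_arrow).trans cokernelZeroIsoTarget
    exact h.of_iso e.symm
  obtain ⟨n, s, hmono, hs0, hstop, hsemi, hdec, -⟩ :=
    HN17.chainAbove hadd hstab' hε hd (⊥ : Subobject X) hbot
  refine ⟨⟨n + 1, s, hmono, hs0, hstop⟩, fun i => hsemi i, fun i j hij => ?_⟩
  have h1 := hdec i j hij
  have hnzj : ¬ IsZero (cokernel (Subobject.ofLE (s j.castSucc) (s j.succ)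
      (hmono (le_of_lt (Fin.castSucc_lt_succ (i := j)))))) := (hsemi j).1
  have hnzi : ¬ IsZero (cokernel (Subobject.ofLE (s i.castSucc) (s i.succ)
      (hmono (le_of_lt (Fin.castSucc_lt_succ (i := i)))))) := (hsemi i).1
  exact (HN17.cross_lt_iff (hstab' _ hnzj) (hstab' _ hnzi)).mpr h1
end
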